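/- For all i ≥ 1, P_{2i+1}(u)·P_{2i+3}(u) − P_{2i+1}(u) − P_{2i+3}(u) < P_{4i+3}(u); consequently, writing g(a,b) = ab − a − b for the 2-variable Frobenius number of coprime a,b, one has g(P_{2i+1}(u), P_{2i+3}(u)) < P_{4i+3}(u). -/
import Mathlib


def pell (u : ℕ) : ℕ → ℕ
  | 0 => 0
  | 1 => 1
  | n + 2 => u * pell u (n + 1) + pell u n

lemma pell_add (u m n : ℕ) :
    pell u (m + n + 1) = pell u (m + 1) * pell u (n + 1) + pell u m * pell u n := by
  induction m using Nat.twoStepInduction generalizing n with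
  | zero => simp [pell]
  | one => rw [show 1 + n + 1 = n + 2 by ring]; show u * pell u (n+1) + pell u n = _; simp [pell]
  | more m ih1 ih2 =>
    have h1 : m + 2 + n + 1 = (m + n + 1) + 2 := by ring
    rw [h1, show pell u ((m + n + 1) + 2) = u * pell u (m + n + 2) + pell u (m + n + 1) from rfl]
    have h2 : m + n + 2 = (m + 1) + n + 1 := by ring
    rw [h2, ih2 n, ih1 n,
      show pell u (m + 2 + 1) = u * pell u (m + 2) + pell u (m + 1) from rfl,
      show pell u (m + 2) = u * pell u (m + 1) + pell u m from rfl]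
    ring

lemma pell_pos (u : ℕ) (hu : 1 ≤ u) (n : ℕ) : 1 ≤ pell u (n + 1) := by
  induction n using Nat.twoStepInduction with
  | zero => simp [pell]
  | one => show 1 ≤ u * pell u 1 + pell u 0; simp [pell]; omega
  | more n ih1 ih2 =>
    show 1 ≤ u * pell u (n + 2) + pell u (n + 1)
    nlinarith

theorem stmt_7 (u : ℕ) (hu : 1 ≤ u) (i : ℕ) (hi : 1 ≤ i) :
    (pell u (2 * i + 1) * pell u (2 * i + 3) : ℤ) - pell u (2 * i + 1) - pell u (2 * i + 3)
      < pell u (4 * i + 3) := by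
  have hid : pell u (4 * i + 3) = pell u (2 * i + 1) * pell u (2 * i + 3)
      + pell u (2 * i) * pell u (2 * i + 2) := by
    have := pell_add u (2 * i) (2 * i + 2)
    convert this using 2 <;> ring
  have h1 := pell_pos u hu (2 * i)
  have h2 := pell_pos u hu (2 * i + 2)
  push_cast [hid]
  nlinarith [Nat.zero_le (pell u (2 * i) * pell u (2 * i + 2))]
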